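/- Let M be a finite measure space and {φ_n}_{n=1}^∞ ⊂ L^1(M) a minimal system with biorthogonal functionals {c_n} ⊂ L^∞(M), and let 𝔾 ⊂ ℂ be a bounded set with 1 ∈ 𝔾. Then {φ_n} possesses the asymptotic approximation property in L^1(M) if and only if there exist a dense subset D ⊂ L^1(M) and a constant C > 0 such that for every f ∈ D, every ε, δ, σ > 0 and every n_0 ∈ ℕ there exist N > n_0, coefficients {α_n}_{n=n_0}^N ⊂ ℂ, values {δ_n}_{n=n_0}^N ⊂ 𝔾, a measurable set E ⊂ M, and a function ĝ ∈ L^1(M) such that: (1) |E^∁| < σ; (2) ‖H‖_1 < ε where H = Σ_{n=n_0}^N α_n φ_n; (3) f(x) = ĝ(x) for all x ∈ E; (4) ‖ĝ‖_1 ≤ C‖f‖_1; (5) ∫_E |f(x) − Q(x)| dx = ‖ĝ − Q‖_1 < δ where Q = Σ_{n=n_0}^N δ_n α_n φ_n. -/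

import Mathlib

open MeasureTheory Filter Topology

/-- `D` is a subset of `L¹(μ)` (identified with integrable functions) which is dense
in the `L¹` metric. -/
def L1DenseSubset {M : Type*} [MeasurableSpace M] (μ : Measure M)
    (D : Set (M → ℂ)) : Prop :=
  (∀ f ∈ D, Integrable f μ) ∧
  ∀ g : M → ℂ, Integrable g μ → ∀ η > (0 : ℝ), ∃ f ∈ D, ∫ x, ‖f x - g x‖ ∂μ < η

/-- The asymptotic approximation property (Definition 5 of the paper) of the system `φ`
in `L¹(μ)`, with a given dense subset `D` and constant `C`. -/
def AsymApproxPropWith {M : Type*} [MeasurableSpace M] (μ : Measure M)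
    (φ : ℕ → M → ℂ) (𝔾 : Set ℂ) (D : Set (M → ℂ)) (C : ℝ) : Prop :=
  ∀ f ∈ D, ∀ ε > (0 : ℝ), ∀ δ > (0 : ℝ), ∀ σ > (0 : ℝ), ∀ n0 : ℕ,
    ∃ N : ℕ, n0 < N ∧ ∃ α : ℕ → ℂ, ∃ d : ℕ → ℂ, (∀ n, d n ∈ 𝔾) ∧
      ∃ E : Set M, MeasurableSet E ∧ μ Eᶜ < ENNReal.ofReal σ ∧
        (∫ x, ‖∑ n ∈ Finset.Icc n0 N, α n * φ n x‖ ∂μ < ε) ∧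
        (∫ x in E, ‖f x - ∑ n ∈ Finset.Icc n0 N, d n * α n * φ n x‖ ∂μ < δ) ∧
        (∫ x in Eᶜ, ‖∑ n ∈ Finset.Icc n0 N, d n * α n * φ n x‖ ∂μ ≤
          C * ∫ x, ‖f x‖ ∂μ)

/-- The equivalent form of the asymptotic approximation property given in
Lemma `AsymApproxLemma` of the paper, with a given dense subset `D` and constant `C`. -/
def AsymApproxPropHatWith {M : Type*} [MeasurableSpace M] (μ : Measure M)
    (φ : ℕ → M → ℂ) (𝔾 : Set ℂ) (D : Set (M → ℂ)) (C : ℝ) : Prop :=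
  ∀ f ∈ D, ∀ ε > (0 : ℝ), ∀ δ > (0 : ℝ), ∀ σ > (0 : ℝ), ∀ n0 : ℕ,
    ∃ N : ℕ, n0 < N ∧ ∃ α : ℕ → ℂ, ∃ d : ℕ → ℂ, (∀ n, d n ∈ 𝔾) ∧
      ∃ E : Set M, MeasurableSet E ∧ μ Eᶜ < ENNReal.ofReal σ ∧
        ∃ g : M → ℂ, Integrable g μ ∧
          (∫ x, ‖∑ n ∈ Finset.Icc n0 N, α n * φ n x‖ ∂μ < ε) ∧
          (∀ x ∈ E, f x = g x) ∧
          (∫ x, ‖g x‖ ∂μ ≤ C * ∫ x, ‖f x‖ ∂μ) ∧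
          (∫ x in E, ‖f x - ∑ n ∈ Finset.Icc n0 N, d n * α n * φ n x‖ ∂μ =
            ∫ x, ‖g x - ∑ n ∈ Finset.Icc n0 N, d n * α n * φ n x‖ ∂μ) ∧
          (∫ x, ‖g x - ∑ n ∈ Finset.Icc n0 N, d n * α n * φ n x‖ ∂μ < δ)

/-- The system `φ` possesses the asymptotic approximation property in
`L¹(μ)` if and only if the statement of Lemma `AsymApproxLemma` holds for some dense
subset `D` and constant `C > 0`. -/
theorem asymApproxProp_iff_hat {M : Type*} [MeasurableSpace M]
    (μ : Measure M) [IsFiniteMeasure μ]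
    (φ : ℕ → M → ℂ) (hφ : ∀ n, Integrable (φ n) μ)
    (c : ℕ → M → ℂ) (hc : ∀ n, MemLp (c n) ⊤ μ)
    (hbi : ∀ n m : ℕ, ∫ x, φ m x * c n x ∂μ = if n = m then 1 else 0)
    (𝔾 : Set ℂ) (h𝔾bdd : Bornology.IsBounded 𝔾) (h𝔾one : (1 : ℂ) ∈ 𝔾) :
    (∃ D : Set (M → ℂ), ∃ C : ℝ, L1DenseSubset μ D ∧ 0 < C ∧
        AsymApproxPropWith μ φ 𝔾 D C) ↔
    (∃ D : Set (M → ℂ), ∃ C : ℝ, L1DenseSubset μ D ∧ 0 < C ∧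
        AsymApproxPropHatWith μ φ 𝔾 D C) := by
  classical
  constructor
  · rintro ⟨D, C, hD, hC, hA⟩
    refine ⟨D, C + 1, hD, by linarith, ?_⟩
    intro f hf ε hε δ hδ σ hσ n0
    obtain ⟨N, hN, α, d, hd, E, hE, hσE, hH, hQ1, hQ2⟩ := hA f hf ε hε δ hδ σ hσ n0
    set Q : M → ℂ := fun x => ∑ n ∈ Finset.Icc n0 N, d n * α n * φ n x with hQdef
    have hQint : Integrable Q μ :=
      integrable_finset_sum _ fun n _ => (hφ n).const_mul _
    have hfint : Integrable f μ := hD.1 f hf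
    set g : M → ℂ := fun x => if x ∈ E then f x else Q x with hg
    have hgint : Integrable g μ := by
      have : g = E.indicator f + Eᶜ.indicator Q := by
        funext x
        by_cases hx : x ∈ E <;> simp [hg, Set.indicator, hx]
      rw [this]
      exact (hfint.indicator hE).add (hQint.indicator hE.compl)
    have heq : ∫ x in E, ‖f x - Q x‖ ∂μ = ∫ x, ‖g x - Q x‖ ∂μ := by
      have h1 : (fun x => ‖g x - Q x‖) = E.indicator fun x => ‖f x - Q x‖ := by
        funext x
        by_cases hx : x ∈ E <;> simp [hg, Set.indicator, hx]
      rw [h1, integral_indicator hE]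
    have hnormg : ∫ x, ‖g x‖ ∂μ ≤ (C + 1) * ∫ x, ‖f x‖ ∂μ := by
      have h1 : (fun x => ‖g x‖) = fun x =>
          E.indicator (fun x => ‖f x‖) x + Eᶜ.indicator (fun x => ‖Q x‖) x := by
        funext x
        by_cases hx : x ∈ E <;> simp [hg, Set.indicator, hx]
      have h2 : ∫ x, ‖g x‖ ∂μ =
          (∫ x in E, ‖f x‖ ∂μ) + ∫ x in Eᶜ, ‖Q x‖ ∂μ := by
        rw [h1, integral_add (hfint.norm.indicator hE) (hQint.norm.indicator hE.compl),
          integral_indicator hE, integral_indicator hE.compl]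
      have h3 : ∫ x in E, ‖f x‖ ∂μ ≤ ∫ x, ‖f x‖ ∂μ :=
        setIntegral_le_integral hfint.norm
          (Filter.Eventually.of_forall fun x => norm_nonneg _)
      rw [h2]; linarith [hQ2]
    exact ⟨N, hN, α, d, hd, E, hE, hσE, g, hgint, hH,
      fun x hx => by simp [hg, hx], hnormg, heq, heq ▸ hQ1⟩
  · rintro ⟨D, C, hD, hC, hA⟩
    refine ⟨D, C + 1, hD, by linarith, ?_⟩
    intro f hf ε hε δ hδ σ hσ n0
    have hfint : Integrable f μ := hD.1 f hf
    by_cases h0 : ∫ x, ‖f x‖ ∂μ ≤ 0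
    · refine ⟨n0 + 1, Nat.lt_succ_self n0, fun _ => 0, fun _ => 1, fun _ => h𝔾one,
        Set.univ, MeasurableSet.univ, ?_, ?_, ?_, ?_⟩
      · simpa using ENNReal.ofReal_pos.mpr hσ
      · simpa using hε
      · have : ∫ x in (Set.univ : Set M), ‖f x‖ ∂μ ≤ ∫ x, ‖f x‖ ∂μ :=
          setIntegral_le_integral hfint.norm
            (Filter.Eventually.of_forall fun x => norm_nonneg _)
        simpa using lt_of_le_of_lt (le_trans this h0) hδ
      · have hnn : (0 : ℝ) ≤ ∫ x, ‖f x‖ ∂μ :=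
          integral_nonneg fun x => norm_nonneg _
        simp only [mul_zero, zero_mul, Finset.sum_const_zero, norm_zero,
          integral_zero]
        positivity
    · push_neg at h0
      set δ' : ℝ := min δ (∫ x, ‖f x‖ ∂μ) with hδ'def
      have hδ' : 0 < δ' := lt_min hδ h0
      obtain ⟨N, hN, α, d, hd, E, hE, hσE, g, hgint, hH, hfg, hgnorm, heq, hlt⟩ :=
        hA f hf ε hε δ' hδ' σ hσ n0
      set Q : M → ℂ := fun x => ∑ n ∈ Finset.Icc n0 N, d n * α n * φ n x with hQdef
      have hQint : Integrable Q μ :=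
        integrable_finset_sum _ fun n _ => (hφ n).const_mul _
      refine ⟨N, hN, α, d, hd, E, hE, hσE, hH,
        lt_of_lt_of_le (heq ▸ hlt) (min_le_left _ _), ?_⟩
      have hptw : ∀ x, ‖Q x‖ ≤ ‖g x - Q x‖ + ‖g x‖ := by
        intro x
        calc ‖Q x‖ = ‖g x - (g x - Q x)‖ := by congr 1; ring
          _ ≤ ‖g x‖ + ‖g x - Q x‖ := norm_sub_le _ _
          _ = ‖g x - Q x‖ + ‖g x‖ := add_comm _ _
      have h1 : ∫ x in Eᶜ, ‖Q x‖ ∂μ ≤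
          ∫ x in Eᶜ, (‖g x - Q x‖ + ‖g x‖) ∂μ :=
        integral_mono hQint.norm.integrableOn
          ((hgint.sub hQint).norm.integrableOn.add hgint.norm.integrableOn)
          hptw
      have h2 : ∫ x in Eᶜ, (‖g x - Q x‖ + ‖g x‖) ∂μ =
          (∫ x in Eᶜ, ‖g x - Q x‖ ∂μ) + ∫ x in Eᶜ, ‖g x‖ ∂μ :=
        integral_add (hgint.sub hQint).norm.integrableOn hgint.norm.integrableOn
      have h3 : ∫ x in Eᶜ, ‖g x - Q x‖ ∂μ ≤ ∫ x, ‖g x - Q x‖ ∂μ :=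
        setIntegral_le_integral (hgint.sub hQint).norm
          (Filter.Eventually.of_forall fun x => norm_nonneg _)
      have h4 : ∫ x in Eᶜ, ‖g x‖ ∂μ ≤ ∫ x, ‖g x‖ ∂μ :=
        setIntegral_le_integral hgint.norm
          (Filter.Eventually.of_forall fun x => norm_nonneg _)
      have h5 : ∫ x, ‖g x - Q x‖ ∂μ < δ' := hlt
      have h6 : δ' ≤ ∫ x, ‖f x‖ ∂μ := min_le_right _ _
      have : (C + 1) * ∫ x, ‖f x‖ ∂μ =
          C * (∫ x, ‖f x‖ ∂μ) + ∫ x, ‖f x‖ ∂μ := by ring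
      rw [this]
      linarith [hgnorm]
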